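/- Assume r_0 >= 1. Let x be a nonzero element of L with v(x) < N_v such that Exc(x) fails. Then there exists an index i_0 with r_0 <= i_0 <= r and a_{i_0} != 0 such that v(phi(x)) = v(a_{i_0}) + q^(i_0) * v(x), this value is strictly less than v(x), and moreover v(x) < -v(a_{i_0})/(q^(i_0) - 1). In particular phi(x) != 0 and v(phi(x)) < v(x). (Lemma 2.12 of the paper.) -/

import Mathlib

open Filter Topology Finset

universe u

section Drinfeld

variable {L : Type u} [Field L] {k : Type*} [Field k]

/-- The integer value of the valuation `v` at `y` (junk value `0` at `y = 0`). -/
noncomputable def vz (v : L → WithTop ℤ) (y : L) : ℤ := WithTop.untopD 0 (v y)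

/-- `v : L → ℤ ∪ {∞}` is a normalized discrete valuation: `v 0 = ∞`, `v` is finite and
surjective onto `ℤ` on nonzero elements, `v (x * y) = v x + v y` and
`v (x + y) ≥ min (v x) (v y)`. -/
structure IsDVal (v : L → WithTop ℤ) : Prop where
  map_zero : v 0 = ⊤
  ne_top : ∀ x : L, x ≠ 0 → v x ≠ ⊤
  map_mul : ∀ x y : L, v (x * y) = v x + v y
  add_min : ∀ x y : L, min (v x) (v y) ≤ v (x + y)
  surj : ∀ n : ℤ, ∃ x : L, v x = (n : WithTop ℤ)

/-- `res : L → k` restricted to the valuation ring of `v` is the quotient map onto the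
residue field `k` of `v`. -/
structure IsResidue (v : L → WithTop ℤ) (res : L → k) : Prop where
  map_one : res 1 = 1
  map_add : ∀ x y : L, 0 ≤ v x → 0 ≤ v y → res (x + y) = res x + res y
  map_mul : ∀ x y : L, 0 ≤ v x → 0 ≤ v y → res (x * y) = res x * res y
  eq_zero_iff : ∀ x : L, 0 ≤ v x → (res x = 0 ↔ 0 < v x)
  surj : ∀ c : k, ∃ x : L, 0 ≤ v x ∧ res x = c

/-- The angular component of `y` at `v`, with respect to the uniformizer `π` and the
residue map `res`: the residue of `y * π ^ (-v y)`. -/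
noncomputable def ac (v : L → WithTop ℤ) (π : L) (res : L → k) (y : L) : k :=
  res (y * π ^ (-(vz v y)))

/-- The `F_q`-linear map `φ(x) = ∑_{i=r₀}^{r} a i * x^(q^i)`. -/
noncomputable def phiMap (q r₀ r : ℕ) (a : ℕ → L) (x : L) : L :=
  ∑ i ∈ Finset.Icc r₀ r, a i * x ^ q ^ i

/-- The set `P_v ⊆ ℚ` of possible exceptional valuations:
`(v(a i) - v(a j))/(q^j - q^i)` for `r₀ ≤ i < j ≤ r` with `a i ≠ 0 ≠ a j`, together with `0`. -/
def Pset (q : ℕ) (v : L → WithTop ℤ) (r₀ r : ℕ) (a : ℕ → L) : Set ℚ :=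
  {0} ∪ {α : ℚ | ∃ i j : ℕ, r₀ ≤ i ∧ i < j ∧ j ≤ r ∧ a i ≠ 0 ∧ a j ≠ 0 ∧
      α = ((vz v (a i) : ℚ) - (vz v (a j) : ℚ)) / ((q : ℚ) ^ j - (q : ℚ) ^ i)}

/-- The set `J(α)` of indices where `v(a i) + q^i * α` attains its minimum. -/
def Jset (q : ℕ) (v : L → WithTop ℤ) (r₀ r : ℕ) (a : ℕ → L) (α : ℚ) : Set ℕ :=
  {i : ℕ | r₀ ≤ i ∧ i ≤ r ∧ a i ≠ 0 ∧
    ∀ j : ℕ, r₀ ≤ j → j ≤ r → a j ≠ 0 →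
      (vz v (a i) : ℚ) + (q : ℚ) ^ i * α ≤ (vz v (a j) : ℚ) + (q : ℚ) ^ j * α}

open scoped Classical in
/-- The set `R_v(α) ⊆ k_v`: `1` together with the nonzero roots of
`∑_{i ∈ J(α)} ac(a i) * X^(q^i)`. -/
noncomputable def Rset (q : ℕ) (v : L → WithTop ℤ) (π : L) (res : L → k)
    (r₀ r : ℕ) (a : ℕ → L) (α : ℚ) : Set k :=
  {1} ∪ {γ : k | γ ≠ 0 ∧
    ∑ i ∈ Finset.Icc r₀ r,
      (if i ∈ Jset q v r₀ r a α then ac v π res (a i) * γ ^ q ^ i else 0) = 0}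

/-- The exceptional condition `Exc(y)`: `v y ∈ P_v` and `ac y ∈ R_v(v y)`. -/
def Exc (q : ℕ) (v : L → WithTop ℤ) (π : L) (res : L → k)
    (r₀ r : ℕ) (a : ℕ → L) (y : L) : Prop :=
  ((vz v y : ℚ) ∈ Pset q v r₀ r a) ∧ ac v π res y ∈ Rset q v π res r₀ r a ((vz v y : ℚ))

/-- The sequence `min(0, v(φⁿ x)) / q^(r n)` whose limit is minus the local height of `x`. -/
noncomputable def locSeq (q r : ℕ) (v : L → WithTop ℤ) (φ : L → L) (x : L) (n : ℕ) : ℝ :=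
  ((min 0 (vz v (φ^[n] x)) : ℤ) : ℝ) / (q : ℝ) ^ (r * n)


variable {v : L → WithTop ℤ}

lemma vz_spec (hv : IsDVal v) {y : L} (hy : y ≠ 0) : v y = (vz v y : WithTop ℤ) := by
  have h := hv.ne_top y hy
  cases hvy : v y with
  | top => exact absurd hvy h
  | coe n => simp [vz, hvy]

lemma vz_one (hv : IsDVal v) : vz v 1 = 0 := by
  have h := hv.map_mul 1 1
  rw [mul_one] at h
  rw [vz_spec hv (one_ne_zero (α := L))] at h
  have h2 : (vz v 1 : WithTop ℤ) = ((vz v 1 + vz v 1 : ℤ) : WithTop ℤ) := by push_cast; exact h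
  rw [WithTop.coe_eq_coe] at h2
  omega

lemma v_one (hv : IsDVal v) : v 1 = 0 := by
  rw [vz_spec hv (one_ne_zero (α := L)), vz_one hv]; rfl

lemma vz_mul (hv : IsDVal v) {y z : L} (hy : y ≠ 0) (hz : z ≠ 0) :
    vz v (y * z) = vz v y + vz v z := by
  have h := hv.map_mul y z
  rw [vz_spec hv hy, vz_spec hv hz, vz_spec hv (mul_ne_zero hy hz)] at h
  have h2 : (vz v (y*z) : WithTop ℤ) = ((vz v y + vz v z : ℤ) : WithTop ℤ) := by push_cast; exact h
  exact_mod_cast h2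

lemma vz_pow (hv : IsDVal v) {y : L} (hy : y ≠ 0) (n : ℕ) :
    vz v (y ^ n) = n * vz v y := by
  induction n with
  | zero => simpa using vz_one hv
  | succ m ih =>
      rw [pow_succ, vz_mul hv (pow_ne_zero m hy) hy, ih]; push_cast; ring

lemma vz_inv (hv : IsDVal v) {y : L} (hy : y ≠ 0) : vz v y⁻¹ = -vz v y := by
  have h := vz_mul hv hy (inv_ne_zero hy)
  rw [mul_inv_cancel₀ hy, vz_one hv] at h
  omega

lemma vz_zpow (hv : IsDVal v) {y : L} (hy : y ≠ 0) (n : ℤ) :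
    vz v (y ^ n) = n * vz v y := by
  cases n with
  | ofNat m => rw [Int.ofNat_eq_coe, zpow_natCast, vz_pow hv hy]
  | negSucc m =>
      rw [zpow_negSucc, vz_inv hv (pow_ne_zero _ hy), vz_pow hv hy, Int.negSucc_eq]
      push_cast; ring

lemma v_sum_ge (hv : IsDVal v) {ι : Type*} {s : Finset ι} {t : ι → L} {m : WithTop ℤ}
    (h : ∀ i ∈ s, m ≤ v (t i)) : m ≤ v (∑ i ∈ s, t i) := by
  classical
  induction s using Finset.induction_on with
  | empty => simp [hv.map_zero]
  | @insert i s' hnot ih =>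
      rw [Finset.sum_insert hnot]
      refine le_trans ?_ (hv.add_min _ _)
      exact le_min (h i (Finset.mem_insert_self i s'))
        (ih fun j hj => h j (Finset.mem_insert_of_mem hj))

variable {res : L → k}

lemma res_zero (hv : IsDVal v) (hres : IsResidue v res) : res (0 : L) = 0 := by
  have h := hres.map_add 0 0 (by simp [hv.map_zero]) (by simp [hv.map_zero])
  rw [add_zero] at h
  linear_combination -h

lemma res_sum (hv : IsDVal v) (hres : IsResidue v res) {ι : Type*} {s : Finset ι} {t : ι → L}
    (h : ∀ i ∈ s, 0 ≤ v (t i)) : res (∑ i ∈ s, t i) = ∑ i ∈ s, res (t i) := by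
  classical
  induction s using Finset.induction_on with
  | empty => simpa using res_zero hv hres
  | @insert i s' hnot ih =>
      rw [Finset.sum_insert hnot, Finset.sum_insert hnot,
        hres.map_add _ _ (h i (Finset.mem_insert_self i s'))
          (v_sum_ge hv fun j hj => h j (Finset.mem_insert_of_mem hj)),
        ih fun j hj => h j (Finset.mem_insert_of_mem hj)]

lemma res_pow (hv : IsDVal v) (hres : IsResidue v res) {y : L} (h : 0 ≤ v y) (n : ℕ) :
    res (y ^ n) = res y ^ n := by
  have hpow : ∀ m : ℕ, 0 ≤ v (y ^ m) := by
    intro m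
    induction m with
    | zero => rw [pow_zero, v_one hv]
    | succ l ih =>
        rw [pow_succ, hv.map_mul]
        exact add_nonneg ih h
  induction n with
  | zero => simpa using hres.map_one
  | succ m ih => rw [pow_succ, pow_succ, hres.map_mul _ _ (hpow m) h, ih]

lemma v_unit_part (hv : IsDVal v) {π : L} (hπ : v π = 1) {y : L} (hy : y ≠ 0) :
    v (y * π ^ (-(vz v y))) = 0 := by
  have hπ0 : π ≠ 0 := fun h => by simp [h, hv.map_zero] at hπ
  have hvπ : vz v π = 1 := by
    have := vz_spec hv hπ0
    rw [hπ] at this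
    exact_mod_cast this.symm
  have h1 : vz v (y * π ^ (-(vz v y))) = 0 := by
    rw [vz_mul hv hy (zpow_ne_zero _ hπ0), vz_zpow hv hπ0, hvπ]; ring
  rw [vz_spec hv (mul_ne_zero hy (zpow_ne_zero _ hπ0)), h1]; rfl

lemma ac_ne_zero (hv : IsDVal v) (hres : IsResidue v res) {π : L} (hπ : v π = 1)
    {y : L} (hy : y ≠ 0) : ac v π res y ≠ 0 := by
  have h0 := v_unit_part hv hπ hy
  have h1 := hres.eq_zero_iff _ (le_of_eq h0.symm)
  rw [ac]
  intro hcon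
  rw [h1, h0] at hcon
  exact (lt_irrefl _ hcon)



lemma vz_of_v_zero {y : L} (h : v y = 0) : vz v y = 0 := by
  have h' : v y = ((0:ℤ) : WithTop ℤ) := h
  simp [vz, h']

lemma lt_neg_div_iff {A B x : ℚ} (hB : 0 < B - 1) : x < -A / (B - 1) ↔ A + B * x < x := by
  rw [lt_div_iff₀ hB]; constructor <;> intro h <;> nlinarith

/-- Lemma 2.12: if `r₀ ≥ 1`, `v(x) < N_v`, and `Exc(x)` fails, then there is an index `i₀`
with `v(φ(x)) = v(a i₀) + q^(i₀) v(x) < v(x)` and `v(x) < -v(a i₀)/(q^(i₀) - 1)`. -/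
theorem statement8
    (p q : ℕ) (hp : p.Prime) (hq : ∃ s : ℕ, 0 < s ∧ q = p ^ s)
    [CharP L p] (F : Subfield L) (hF : Nat.card F = q)
    (v : L → WithTop ℤ) (hv : IsDVal v)
    (π : L) (hπ : v π = 1) (res : L → k) (hres : IsResidue v res)
    (r₀ r : ℕ) (hr1 : 1 ≤ r) (hr₀r : r₀ ≤ r) (hr₀1 : 1 ≤ r₀)
    (a : ℕ → L) (har₀ : a r₀ ≠ 0) (har : a r = 1)
    (x : L) (hx : x ≠ 0)
    (hN : ∃ i ∈ Finset.Icc r₀ r, a i ≠ 0 ∧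
      (vz v x : ℚ) < -(vz v (a i) : ℚ) / ((q : ℚ) ^ i - 1))
    (hexc : ¬ Exc q v π res r₀ r a x) :
    ∃ i₀ ∈ Finset.Icc r₀ r, a i₀ ≠ 0 ∧
      phiMap q r₀ r a x ≠ 0 ∧
      v (phiMap q r₀ r a x) = ((vz v (a i₀) + (q : ℤ) ^ i₀ * vz v x : ℤ) : WithTop ℤ) ∧
      vz v (phiMap q r₀ r a x) < vz v x ∧
      (vz v x : ℚ) < -(vz v (a i₀) : ℚ) / ((q : ℚ) ^ i₀ - 1) := by
  classical
  have hq2 : (2:ℕ) ≤ q := by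
    obtain ⟨s, hs0, hqs⟩ := hq
    calc (2:ℕ) ≤ p := hp.two_le
      _ ≤ p ^ s := Nat.le_self_pow (by omega) p
      _ = q := hqs.symm
  have hq1Q : (1:ℚ) < q := by exact_mod_cast hq2
  have hπ0 : π ≠ 0 := fun h => by simp [h, hv.map_zero] at hπ
  have hvπ : vz v π = 1 := by
    have h := vz_spec hv hπ0; rw [hπ] at h; exact_mod_cast h.symm
  set T : Finset ℕ := (Finset.Icc r₀ r).filter (fun i => a i ≠ 0) with hT
  have hr₀T : r₀ ∈ T := by simp [hT, har₀, hr₀r]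
  set f : ℕ → ℤ := fun i => vz v (a i) + (q:ℤ) ^ i * vz v x with hf
  obtain ⟨i₀, hi₀T, hmin⟩ := T.exists_min_image f ⟨r₀, hr₀T⟩
  obtain ⟨hi₀Icc, hai₀⟩ := Finset.mem_filter.mp hi₀T
  obtain ⟨hr₀i₀, hi₀r⟩ := Finset.mem_Icc.mp hi₀Icc
  have hcast : ∀ i : ℕ, ((f i : ℤ) : ℚ) = (vz v (a i) : ℚ) + (q:ℚ) ^ i * (vz v x : ℚ) := by
    intro i; simp only [hf]; push_cast; ring
  have hJ : ∀ i : ℕ, i ∈ Jset q v r₀ r a ((vz v x : ℚ)) ↔ (i ∈ T ∧ f i = f i₀) := by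
    intro i
    constructor
    · rintro ⟨h1, h2, h3, h4⟩
      have hiT : i ∈ T := Finset.mem_filter.mpr ⟨Finset.mem_Icc.mpr ⟨h1, h2⟩, h3⟩
      refine ⟨hiT, le_antisymm ?_ (hmin i hiT)⟩
      have h5 := h4 i₀ hr₀i₀ hi₀r hai₀
      rw [← hcast, ← hcast] at h5
      exact_mod_cast h5
    · rintro ⟨hiT, hfi⟩
      obtain ⟨hIcc, hai⟩ := Finset.mem_filter.mp hiT
      obtain ⟨h1, h2⟩ := Finset.mem_Icc.mp hIcc
      refine ⟨h1, h2, hai, fun j hj1 hj2 haj => ?_⟩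
      have hjT : j ∈ T := Finset.mem_filter.mpr ⟨Finset.mem_Icc.mpr ⟨hj1, hj2⟩, haj⟩
      have h6 : f i ≤ f j := hfi ▸ hmin j hjT
      rw [← hcast, ← hcast]
      exact_mod_cast h6
  -- the key sum is nonzero
  have hSne : (∑ i ∈ Finset.Icc r₀ r,
      (if i ∈ Jset q v r₀ r a ((vz v x : ℚ)) then
        ac v π res (a i) * (ac v π res x) ^ q ^ i else 0)) ≠ 0 := by
    by_cases huniq : ∀ j ∈ T, f j = f i₀ → j = i₀
    · have hsum : (∑ i ∈ Finset.Icc r₀ r,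
          (if i ∈ Jset q v r₀ r a ((vz v x : ℚ)) then
            ac v π res (a i) * (ac v π res x) ^ q ^ i else 0))
          = ac v π res (a i₀) * (ac v π res x) ^ q ^ i₀ := by
        rw [Finset.sum_eq_single_of_mem i₀ hi₀Icc]
        · rw [if_pos ((hJ i₀).mpr ⟨hi₀T, rfl⟩)]
        · intro j _ hne
          rw [if_neg]
          intro hjJ
          obtain ⟨hjT, hfj⟩ := (hJ j).mp hjJ
          exact hne (huniq j hjT hfj)
      rw [hsum]
      exact mul_ne_zero (ac_ne_zero hv hres hπ hai₀)
        (pow_ne_zero _ (ac_ne_zero hv hres hπ hx))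
    · push_neg at huniq
      obtain ⟨j, hjT, hfj, hji₀⟩ := huniq
      obtain ⟨hjIcc, haj⟩ := Finset.mem_filter.mp hjT
      obtain ⟨hj1, hj2⟩ := Finset.mem_Icc.mp hjIcc
      have key : ∀ i' j' : ℕ, i' < j' → f i' = f j' →
          (vz v x : ℚ) = ((vz v (a i') : ℚ) - (vz v (a j') : ℚ)) / ((q:ℚ)^j' - (q:ℚ)^i') := by
        intro i' j' hij hfe
        have hlt : (q:ℚ)^i' < (q:ℚ)^j' := by
          exact pow_lt_pow_right₀ hq1Q hij
        rw [eq_div_iff (by linarith)]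
        have hfe' : (vz v (a i') : ℚ) + (q:ℚ)^i' * (vz v x:ℚ)
            = (vz v (a j') : ℚ) + (q:ℚ)^j' * (vz v x:ℚ) := by
          rw [← hcast, ← hcast]; exact_mod_cast hfe
        linear_combination -hfe'
      have hP : ((vz v x : ℚ)) ∈ Pset q v r₀ r a := by
        rcases lt_or_gt_of_ne hji₀ with hlt | hgt
        · exact Set.mem_union_right _ ⟨j, i₀, hj1, hlt, hi₀r, haj, hai₀, key j i₀ hlt hfj⟩
        · exact Set.mem_union_right _ ⟨i₀, j, hr₀i₀, hgt, hj2, hai₀, haj, key i₀ j hgt hfj.symm⟩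
      have hnR : ac v π res x ∉ Rset q v π res r₀ r a ((vz v x : ℚ)) :=
        fun hR => hexc ⟨hP, hR⟩
      intro hS0
      exact hnR (Set.mem_union_right _ ⟨ac_ne_zero hv hres hπ hx, hS0⟩)
  -- valuation of φ(x)
  set m : ℤ := f i₀ with hm
  set g : ℕ → L := fun i => a i * x ^ q ^ i * π ^ (-m) with hg
  have hgne : ∀ i : ℕ, a i ≠ 0 → g i ≠ 0 := fun i hai =>
    mul_ne_zero (mul_ne_zero hai (pow_ne_zero _ hx)) (zpow_ne_zero _ hπ0)
  have hvzg : ∀ i : ℕ, a i ≠ 0 → vz v (g i) = f i - m := by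
    intro i hai
    simp only [hg]
    rw [vz_mul hv (mul_ne_zero hai (pow_ne_zero _ hx)) (zpow_ne_zero _ hπ0),
      vz_mul hv hai (pow_ne_zero _ hx), vz_pow hv hx, vz_zpow hv hπ0, hvπ]
    simp only [hf]
    push_cast; ring
  have hvg : ∀ i ∈ Finset.Icc r₀ r, 0 ≤ v (g i) := by
    intro i hi
    by_cases hai : a i = 0
    · simp [hg, hai, hv.map_zero]
    · have hiT : i ∈ T := Finset.mem_filter.mpr ⟨hi, hai⟩
      rw [vz_spec hv (hgne i hai), hvzg i hai]
      have h7 : (0:ℤ) ≤ f i - m := sub_nonneg.mpr (hmin i hiT)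
      exact_mod_cast h7
  have hresg : ∀ i ∈ Finset.Icc r₀ r, res (g i) =
      (if i ∈ Jset q v r₀ r a ((vz v x : ℚ)) then
        ac v π res (a i) * (ac v π res x) ^ q ^ i else 0) := by
    intro i hi
    by_cases hiJ : i ∈ Jset q v r₀ r a ((vz v x : ℚ))
    · rw [if_pos hiJ]
      obtain ⟨hiT, hfi⟩ := (hJ i).mp hiJ
      obtain ⟨_, hai⟩ := Finset.mem_filter.mp hiT
      have hexp : π ^ (-m) = π ^ (-(vz v (a i))) * (π ^ (-(vz v x))) ^ (q ^ i) := by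
        rw [← zpow_natCast (π ^ (-(vz v x))) (q ^ i), ← zpow_mul, ← zpow_add₀ hπ0]
        congr 1
        rw [← hfi]
        simp only [hf]
        push_cast; ring
      have hid : g i = (a i * π ^ (-(vz v (a i)))) * (x * π ^ (-(vz v x))) ^ q ^ i := by
        simp only [hg]
        rw [hexp, mul_pow]
        ring
      have hu0 : x * π ^ (-(vz v x)) ≠ 0 := mul_ne_zero hx (zpow_ne_zero _ hπ0)
      have hA : 0 ≤ v (a i * π ^ (-(vz v (a i)))) := le_of_eq (v_unit_part hv hπ hai).symm
      have hC : 0 ≤ v (x * π ^ (-(vz v x))) := le_of_eq (v_unit_part hv hπ hx).symm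
      have hB : 0 ≤ v ((x * π ^ (-(vz v x))) ^ q ^ i) := by
        have h8 : vz v ((x * π ^ (-(vz v x))) ^ q ^ i) = 0 := by
          rw [vz_pow hv hu0]
          rw [vz_of_v_zero (v_unit_part hv hπ hx), mul_zero]
        rw [vz_spec hv (pow_ne_zero _ hu0), h8]
        exact le_refl _
      rw [hid, hres.map_mul _ _ hA hB, res_pow hv hres hC]
      rfl
    · rw [if_neg hiJ]
      by_cases hai : a i = 0
      · simp [hg, hai, res_zero hv hres]
      · have hiT : i ∈ T := Finset.mem_filter.mpr ⟨hi, hai⟩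
        have hne : f i ≠ m := fun h => hiJ ((hJ i).mpr ⟨hiT, h⟩)
        have hpos : (0:ℤ) < f i - m := by
          have := hmin i hiT
          omega
        refine (hres.eq_zero_iff _ (hvg i hi)).mpr ?_
        rw [vz_spec hv (hgne i hai), hvzg i hai]
        exact_mod_cast hpos
  have hsum_eq : phiMap q r₀ r a x * π ^ (-m) = ∑ i ∈ Finset.Icc r₀ r, g i := by
    rw [phiMap, Finset.sum_mul]
  have hres_sum : res (phiMap q r₀ r a x * π ^ (-m)) ≠ 0 := by
    rw [hsum_eq, res_sum hv hres hvg, Finset.sum_congr rfl hresg]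
    exact hSne
  have hv_sum0 : v (phiMap q r₀ r a x * π ^ (-m)) = 0 := by
    have hge : 0 ≤ v (phiMap q r₀ r a x * π ^ (-m)) := by
      rw [hsum_eq]; exact v_sum_ge hv hvg
    by_contra hne
    exact hres_sum ((hres.eq_zero_iff _ hge).mpr (lt_of_le_of_ne hge (Ne.symm hne)))
  have hφne : phiMap q r₀ r a x ≠ 0 := by
    intro h0
    rw [h0, zero_mul, hv.map_zero] at hv_sum0
    exact (by simp : (⊤ : WithTop ℤ) ≠ 0) hv_sum0
  have hvφ : vz v (phiMap q r₀ r a x) = m := by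
    have h10 := vz_mul hv hφne (zpow_ne_zero (-m) hπ0)
    have h11 : vz v (phiMap q r₀ r a x * π ^ (-m)) = 0 := vz_of_v_zero hv_sum0
    rw [h11, vz_zpow hv hπ0, hvπ] at h10
    omega
  have hvφ2 : v (phiMap q r₀ r a x) = (m : WithTop ℤ) := by
    rw [vz_spec hv hφne, hvφ]
  -- conclusions
  obtain ⟨iN, hiNmem, haN, hltN⟩ := hN
  have hfNlt : f iN < vz v x := by
    obtain ⟨h1, _⟩ := Finset.mem_Icc.mp hiNmem
    have hBpos : (0:ℚ) < (q:ℚ)^iN - 1 := by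
      have : (1:ℚ) < (q:ℚ)^iN := one_lt_pow₀ hq1Q (by omega)
      linarith
    have h12 := (lt_neg_div_iff hBpos).mp hltN
    have h13 : ((f iN : ℤ):ℚ) < (vz v x : ℚ) := by rw [hcast]; exact h12
    exact_mod_cast h13
  have hmlt : m < vz v x :=
    lt_of_le_of_lt (hmin iN (Finset.mem_filter.mpr ⟨hiNmem, haN⟩)) hfNlt
  refine ⟨i₀, hi₀Icc, hai₀, hφne, ?_, ?_, ?_⟩
  · rw [hvφ2, hm]
  · rw [hvφ]; exact hmlt
  · have hBpos : (0:ℚ) < (q:ℚ)^i₀ - 1 := by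
      have : (1:ℚ) < (q:ℚ)^i₀ := one_lt_pow₀ hq1Q (by omega)
      linarith
    rw [lt_neg_div_iff hBpos]
    have h14 : ((f i₀ : ℤ):ℚ) < (vz v x : ℚ) := by exact_mod_cast hmlt
    rw [hcast] at h14
    exact h14

end Drinfeld
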